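/- Let n ≥ 2 and μ > 0, and let v ∈ C¹(ℝⁿ). Suppose that for every b ∈ ℝⁿ, every λ > 0 and every x ∈ ℝⁿ with 0 < |x| < λ, the inequality |x|^{−μ} v(b + x/|x|²) − λ^{−μ} v(b + x/λ²) ≥ 0 holds. Then v is constant on ℝⁿ. -/

import Mathlib

open MeasureTheory Real Filter Metric

noncomputable section

theorem const_of_moving_spheres_v (n : ℕ) (hn : 2 ≤ n) (μ : ℝ) (hμ0 : 0 < μ)
    (v : EuclideanSpace ℝ (Fin n) → ℝ) (hv : ContDiff ℝ 1 v)
    (h : ∀ (b : EuclideanSpace ℝ (Fin n)) (l : ℝ), 0 < l →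
      ∀ x : EuclideanSpace ℝ (Fin n), 0 < ‖x‖ → ‖x‖ < l →
        0 ≤ ‖x‖ ^ (-μ) * v (b + (‖x‖ ^ 2)⁻¹ • x) - l ^ (-μ) * v (b + (l ^ 2)⁻¹ • x)) :
    ∃ c : ℝ, ∀ x : EuclideanSpace ℝ (Fin n), v x = c := by
  suffices H : ∀ P Q : EuclideanSpace ℝ (Fin n), v Q ≤ v P by
    exact ⟨v 0, fun x => le_antisymm (H 0 x) (H x 0)⟩
  intro P Q
  rcases eq_or_ne P Q with rfl | hPQ
  · exact le_refl _
  have hd : 0 < ‖P - Q‖ := by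
    simpa using sub_ne_zero.mpr hPQ
  set d := ‖P - Q‖ with hd_def
  set u := d⁻¹ • (P - Q) with hu_def
  have hu : ‖u‖ = 1 := by
    rw [hu_def, norm_smul, norm_inv, Real.norm_eq_abs, abs_of_pos hd]
    field_simp
    exact hd_def.symm
  have hdu : d • u = P - Q := by
    rw [hu_def, smul_smul]
    rw [mul_inv_cancel₀ hd.ne', one_smul]
  have claim : ∀ s : ℝ, 0 < s → Real.sqrt (s / (s + d)) ^ μ * v Q ≤ v P := by
    intro s hs
    set t := s + d with ht_def
    have ht : 0 < t := by positivity
    have hst : 0 < s * t := by positivity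
    set l := (Real.sqrt (s * t))⁻¹ with hl_def
    have hsq : 0 < Real.sqrt (s * t) := Real.sqrt_pos.mpr hst
    have hl : 0 < l := inv_pos.mpr hsq
    set x := t⁻¹ • u with hx_def
    have hxn : ‖x‖ = t⁻¹ := by
      rw [hx_def, norm_smul, hu, mul_one, norm_inv, Real.norm_eq_abs, abs_of_pos ht]
    have hx0 : 0 < ‖x‖ := by rw [hxn]; positivity
    have hsqlt : Real.sqrt (s * t) < t := by
      have : s * t < t ^ 2 := by nlinarith
      calc Real.sqrt (s * t) < Real.sqrt (t ^ 2) := by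
            exact Real.sqrt_lt_sqrt hst.le this
        _ = t := by rw [Real.sqrt_sq ht.le]
    have hxl : ‖x‖ < l := by
      rw [hxn, hl_def]
      exact inv_strictAnti₀ hsq hsqlt
    set b := Q - s • u with hb_def
    have hc1 : (((t : ℝ)⁻¹) ^ 2)⁻¹ • (t⁻¹ • u) = t • u := by
      rw [smul_smul]
      congr 1
      field_simp
    have hA : b + (‖x‖ ^ 2)⁻¹ • x = P := by
      rw [hxn, hx_def, hc1, hb_def, ht_def, add_smul, hdu]
      abel
    have hl2 : ((l : ℝ) ^ 2)⁻¹ = s * t := by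
      rw [hl_def, inv_pow, inv_inv, Real.sq_sqrt hst.le]
    have hc2 : (s * t) • (t⁻¹ • u) = s • u := by
      rw [smul_smul]
      congr 1
      field_simp
    have hB : b + (l ^ 2)⁻¹ • x = Q := by
      rw [hx_def, hl2, hc2, hb_def]
      abel
    have key := h b l hl x hx0 hxl
    rw [hA, hB, hxn] at key
    have e1 : (t⁻¹ : ℝ) ^ (-μ) = t ^ μ := by
      rw [Real.inv_rpow ht.le, Real.rpow_neg ht.le, inv_inv]
    have e2 : l ^ (-μ) = Real.sqrt (s * t) ^ μ := by
      rw [hl_def, Real.inv_rpow hsq.le, Real.rpow_neg hsq.le, inv_inv]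
    rw [e1, e2] at key
    have hsq' : Real.sqrt (s / t) = Real.sqrt (s * t) / t := by
      rw [show s / t = (s * t) / t ^ 2 by field_simp]
      rw [Real.sqrt_div hst.le, Real.sqrt_sq ht.le]
    have e3 : Real.sqrt (s / t) ^ μ = Real.sqrt (s * t) ^ μ / t ^ μ := by
      rw [hsq', Real.div_rpow (Real.sqrt_nonneg _) ht.le]
    rw [e3, div_mul_eq_mul_div, div_le_iff₀ (Real.rpow_pos_of_pos ht μ)]
    nlinarith [key]
  have h0 : Tendsto (fun s : ℝ => d / (s + d)) atTop (nhds 0) :=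
    Tendsto.div_atTop tendsto_const_nhds (tendsto_atTop_add_const_right _ d tendsto_id)
  have h1 : Tendsto (fun s : ℝ => s / (s + d)) atTop (nhds 1) := by
    have h1' : Tendsto (fun s : ℝ => 1 - d / (s + d)) atTop (nhds (1 - 0)) :=
      tendsto_const_nhds.sub h0
    rw [sub_zero] at h1'
    refine h1'.congr' ?_
    filter_upwards [eventually_gt_atTop (0 : ℝ)] with s hs
    have : s + d ≠ 0 := by positivity
    field_simp
    ring
  have h2 : ContinuousAt (fun y : ℝ => Real.sqrt y ^ μ * v Q) 1 := by
    apply ContinuousAt.mul _ continuousAt_const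
    have hc : ContinuousAt (fun z : ℝ => z ^ μ) (Real.sqrt 1) :=
      Real.continuousAt_rpow_const _ _ (Or.inl (by simp))
    exact hc.comp Real.continuous_sqrt.continuousAt
  have h3 : Tendsto (fun s : ℝ => Real.sqrt (s / (s + d)) ^ μ * v Q) atTop (nhds (v Q)) := by
    have := (h2.tendsto).comp h1
    simpa [Function.comp_def] using this
  exact le_of_tendsto h3 ((eventually_gt_atTop 0).mono claim)
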